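/- Let n ≥ 3 and 0 ≤ a ≤ a + b ≤ n. The maximum of P(S ∈ [a, a+b]) over all S that are sums of n standard uniform random variables equals min{2(a+b)/n, 2(n−a)/n, 1}. -/

import Mathlib

open MeasureTheory ProbabilityTheory Set

/-- The uniform distribution on `[a, b]`. -/
noncomputable def unif (a b : ℝ) : Measure ℝ :=
  (ENNReal.ofReal (b - a))⁻¹ • (volume.restrict (Set.Icc a b))

/-- `F` is smaller than `G` in convex order. -/
def ConvexOrder (F G : Measure ℝ) : Prop :=
  ∀ φ : ℝ → ℝ, ConvexOn ℝ Set.univ φ → Integrable φ F → Integrable φ G →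
    ∫ x, φ x ∂F ≤ ∫ x, φ x ∂G

/-- The set of possible distributions of `X 1 + ... + X n` with `X i ~ Fs i`. -/
def Dset (n : ℕ) (Fs : Fin n → Measure ℝ) : Set (Measure ℝ) :=
  {G | ∃ (Ω : Type) (_ : MeasureSpace Ω),
    IsProbabilityMeasure (ℙ : Measure Ω) ∧
    ∃ X : Fin n → Ω → ℝ, (∀ i, Measurable (X i)) ∧
      (∀ i, Measure.map (X i) ℙ = Fs i) ∧
      Measure.map (fun ω => ∑ i, X i ω) ℙ = G}

/-- The quantile (left-continuous inverse cdf) of a distribution. -/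
noncomputable def quantile (F : Measure ℝ) (t : ℝ) : ℝ :=
  sInf {x : ℝ | t ≤ (F (Set.Iic x)).toReal}

/-- `F` is the distribution of `X + Y` for some `X ~ μ`, `Y ~ ν`. -/
def IsSumDist (μ ν F : Measure ℝ) : Prop :=
  ∃ (Ω : Type) (_ : MeasureSpace Ω), IsProbabilityMeasure (ℙ : Measure Ω) ∧
    ∃ X Y : Ω → ℝ, Measurable X ∧ Measurable Y ∧
      Measure.map X ℙ = μ ∧ Measure.map Y ℙ = ν ∧
      Measure.map (fun ω => X ω + Y ω) ℙ = F



lemma aux_unif01 : unif 0 1 = volume.restrict (Icc 0 1) := by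
  simp [unif]

lemma aux_icc_ico : volume.restrict (Icc (0:ℝ) 1) = volume.restrict (Ico 0 1) :=
  (Measure.restrict_congr_set Ico_ae_eq_Icc).symm

lemma aux_map_affine (α β : ℝ) (hα : α ≠ 0) :
    Measure.map (fun x : ℝ => α * x + β) volume = ENNReal.ofReal |α⁻¹| • volume := by
  have h : (fun x : ℝ => α * x + β) = (fun x : ℝ => x + β) ∘ (fun x : ℝ => α * x) := rfl
  rw [h, ← Measure.map_map (by fun_prop) (by fun_prop), Real.map_volume_mul_left hα,
    Measure.map_smul, map_add_right_eq_self]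

lemma aux_map_affine_restrict (α β : ℝ) (hα : α ≠ 0) {t : Set ℝ} (ht : MeasurableSet t) :
    Measure.map (fun x : ℝ => α * x + β) (volume.restrict ((fun x : ℝ => α * x + β) ⁻¹' t))
      = ENNReal.ofReal |α⁻¹| • volume.restrict t := by
  rw [← Measure.restrict_map (by fun_prop) ht, aux_map_affine α β hα, Measure.restrict_smul]

/-- rotation by 1/2 -/
noncomputable def rotf (v : ℝ) : ℝ := if v < 1/2 then v + 1/2 else v - 1/2

/-- slope -2 measure preserving map -/
noncomputable def gf (v : ℝ) : ℝ := if v < 1/2 then 1 - 2*v else 2 - 2*v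

lemma rotf_meas : Measurable rotf := by
  unfold rotf
  exact Measurable.ite (measurableSet_lt measurable_id measurable_const) (by fun_prop) (by fun_prop)

lemma gf_meas : Measurable gf := by
  unfold gf
  exact Measurable.ite (measurableSet_lt measurable_id measurable_const) (by fun_prop) (by fun_prop)

lemma aux_map_shift_restrict (β : ℝ) {t : Set ℝ} (ht : MeasurableSet t) :
    Measure.map (fun x : ℝ => x + β) (volume.restrict ((fun x : ℝ => x + β) ⁻¹' t))
      = volume.restrict t := by
  rw [← Measure.restrict_map (by fun_prop) ht, map_add_right_eq_self]

lemma rotf_pres : Measure.map rotf (volume.restrict (Ico 0 1)) = volume.restrict (Ico 0 1) := by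
  have hsplit : volume.restrict (Ico (0:ℝ) 1)
      = volume.restrict (Ico 0 (1/2)) + volume.restrict (Ico (1/2) 1) := by
    rw [← Measure.restrict_union (Set.Ico_disjoint_Ico_same) measurableSet_Ico,
      Set.Ico_union_Ico_eq_Ico (by norm_num) (by norm_num)]
  have h1 : Measure.map rotf (volume.restrict (Ico 0 (1/2)))
      = volume.restrict (Ico (1/2) 1) := by
    have e1 : Measure.map rotf (volume.restrict (Ico 0 (1/2)))
        = Measure.map (fun x : ℝ => x + 1/2) (volume.restrict (Ico 0 (1/2))) := by
      refine Measure.map_congr ?_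
      filter_upwards [self_mem_ae_restrict (measurableSet_Ico)] with v hv
      simp only [rotf, if_pos (show v < 1/2 from hv.2)]
    have e2 : (Ico (0:ℝ) (1/2)) = (fun x : ℝ => x + 1/2) ⁻¹' (Ico (1/2) 1) := by
      ext v; simp only [mem_Ico, mem_preimage]; constructor <;> intro h <;> constructor <;> linarith [h.1, h.2]
    rw [e1, e2, aux_map_shift_restrict _ measurableSet_Ico]
  have h2 : Measure.map rotf (volume.restrict (Ico (1/2) 1))
      = volume.restrict (Ico 0 (1/2)) := by
    have e1 : Measure.map rotf (volume.restrict (Ico (1/2) 1))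
        = Measure.map (fun x : ℝ => x + (-(1/2))) (volume.restrict (Ico (1/2) 1)) := by
      refine Measure.map_congr ?_
      filter_upwards [self_mem_ae_restrict (measurableSet_Ico)] with v hv
      simp only [rotf, if_neg (not_lt.mpr hv.1)]
      ring
    have e2 : (Ico (1/2:ℝ) 1) = (fun x : ℝ => x + (-(1/2))) ⁻¹' (Ico 0 (1/2)) := by
      ext v; simp only [mem_Ico, mem_preimage]; constructor <;> intro h <;> constructor <;> linarith [h.1, h.2]
    rw [e1, e2, aux_map_shift_restrict _ measurableSet_Ico]
  rw [hsplit, Measure.map_add _ _ rotf_meas, h1, h2, add_comm, ← hsplit]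


lemma gf_pres : Measure.map gf (volume.restrict (Ico 0 1)) = volume.restrict (Ico 0 1) := by
  have hsplit : volume.restrict (Ico (0:ℝ) 1)
      = volume.restrict (Ico 0 (1/2)) + volume.restrict (Ico (1/2) 1) := by
    rw [← Measure.restrict_union Set.Ico_disjoint_Ico_same measurableSet_Ico,
      Set.Ico_union_Ico_eq_Ico (by norm_num) (by norm_num)]
  have key : ∀ c : ℝ, ∀ s : Set ℝ, (s = Ico ((c-1)/2) (c/2)) →
      Measure.map (fun x : ℝ => (-2) * x + c) (volume.restrict s)
        = ENNReal.ofReal (1/2) • volume.restrict (Ico 0 1) := by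
    intro c s hs
    have e2 : (fun x : ℝ => (-2) * x + c) ⁻¹' (Ico 0 1) = Ioc ((c-1)/2) (c/2) := by
      ext v; simp only [mem_Ioc, mem_preimage, mem_Ico]
      constructor <;> intro h <;> constructor <;> linarith [h.1, h.2]
    have e3 : volume.restrict s
        = volume.restrict ((fun x : ℝ => (-2) * x + c) ⁻¹' (Ico 0 1)) := by
      rw [e2, hs]; exact Measure.restrict_congr_set Ico_ae_eq_Ioc
    rw [e3, aux_map_affine_restrict (-2) c (by norm_num) measurableSet_Ico]
    norm_num [abs_of_pos]
  have h1 : Measure.map gf (volume.restrict (Ico 0 (1/2)))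
      = ENNReal.ofReal (1/2) • volume.restrict (Ico 0 1) := by
    have e1 : Measure.map gf (volume.restrict (Ico 0 (1/2)))
        = Measure.map (fun x : ℝ => (-2) * x + 1) (volume.restrict (Ico 0 (1/2))) := by
      refine Measure.map_congr ?_
      filter_upwards [self_mem_ae_restrict measurableSet_Ico] with v hv
      simp only [gf, if_pos (show v < 1/2 from hv.2)]; ring
    rw [e1, key 1 _ (by norm_num)]
  have h2 : Measure.map gf (volume.restrict (Ico (1/2) 1))
      = ENNReal.ofReal (1/2) • volume.restrict (Ico 0 1) := by
    have e1 : Measure.map gf (volume.restrict (Ico (1/2) 1))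
        = Measure.map (fun x : ℝ => (-2) * x + 2) (volume.restrict (Ico (1/2) 1)) := by
      refine Measure.map_congr ?_
      filter_upwards [self_mem_ae_restrict measurableSet_Ico] with v hv
      simp only [gf, if_neg (not_lt.mpr hv.1)]; ring
    rw [e1, key 2 _ (by norm_num)]
  rw [hsplit, Measure.map_add _ _ gf_meas, h1, h2, ← add_smul,
    ← ENNReal.ofReal_add (by norm_num) (by norm_num)]
  norm_num
  exact hsplit

lemma refl_pres : Measure.map (fun v : ℝ => 1 - v) (volume.restrict (Ico 0 1))
    = volume.restrict (Ico 0 1) := by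
  have e0 : (fun v : ℝ => 1 - v) = (fun x : ℝ => (-1) * x + 1) := by funext v; ring
  have e2 : (fun x : ℝ => (-1) * x + 1) ⁻¹' (Ico 0 1) = Ioc 0 1 := by
    ext v; simp only [mem_Ioc, mem_preimage, mem_Ico]
    constructor <;> intro h <;> constructor <;> linarith [h.1, h.2]
  have e3 : volume.restrict (Ico (0:ℝ) 1)
      = volume.restrict ((fun x : ℝ => (-1) * x + 1) ⁻¹' (Ico 0 1)) := by
    rw [e2]; exact Measure.restrict_congr_set Ico_ae_eq_Ioc
  rw [e0]
  nth_rewrite 1 [e3]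
  rw [aux_map_affine_restrict (-1) 1 (by norm_num) measurableSet_Ico]
  norm_num


lemma id_pres : Measure.map (fun v : ℝ => v) (volume.restrict (Ico 0 1))
    = volume.restrict (Ico 0 1) := Measure.map_id'

lemma trio : ∀ n : ℕ, 2 ≤ n → ∃ φ : Fin n → ℝ → ℝ,
    (∀ i, Measurable (φ i)) ∧
    (∀ i, Measure.map (φ i) (volume.restrict (Ico 0 1)) = volume.restrict (Ico 0 1)) ∧
    (∀ v, ∑ i, φ i v = n / 2) := by
  intro n
  induction n using Nat.strong_induction_on with
  | _ n ih =>
    intro hn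
    match n, hn with
    | 2, _ =>
      refine ⟨![fun v => v, fun v => 1 - v], ?_, ?_, ?_⟩
      · intro i; fin_cases i
        · exact measurable_id
        · exact measurable_const.sub measurable_id
      · intro i; fin_cases i
        · exact id_pres
        · exact refl_pres
      · intro v
        rw [Fin.sum_univ_two]
        show v + (1 - v) = _
        norm_num
    | 3, _ =>
      refine ⟨![fun v => v, rotf, gf], ?_, ?_, ?_⟩
      · intro i; fin_cases i
        · simp; fun_prop
        · exact rotf_meas
        · exact gf_meas
      · intro i; fin_cases i
        · exact id_pres
        · exact rotf_pres
        · exact gf_pres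
      · intro v
        rw [Fin.sum_univ_three]
        show v + rotf v + gf v = _
        unfold rotf gf
        split_ifs <;> push_cast <;> ring
    | (m+4), _ =>
      obtain ⟨φ, h1, h2, h3⟩ := ih (m+2) (by omega) (by omega)
      refine ⟨Fin.cons (fun v => v) (Fin.cons (fun v => 1 - v) φ), ?_, ?_, ?_⟩
      · intro i
        refine Fin.cases ?_ (fun j => ?_) i
        · simp only [Fin.cons_zero]; fun_prop
        · simp only [Fin.cons_succ]
          refine Fin.cases ?_ (fun k => ?_) j
          · simp only [Fin.cons_zero]; fun_prop
          · simp only [Fin.cons_succ]; exact h1 k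
      · intro i
        refine Fin.cases ?_ (fun j => ?_) i
        · simp only [Fin.cons_zero]; exact id_pres
        · simp only [Fin.cons_succ]
          refine Fin.cases ?_ (fun k => ?_) j
          · simp only [Fin.cons_zero]; exact refl_pres
          · simp only [Fin.cons_succ]; exact h2 k
      · intro v
        have h3' := h3 v
        simp only [Fin.sum_univ_succ, Fin.cons_zero, Fin.cons_succ] at h3' ⊢
        push_cast at h3' ⊢
        linarith



noncomputable def msp : MeasureSpace ℝ := { volume := volume.restrict (Icc 0 1) }

lemma construct (n : ℕ) (hn : 3 ≤ n) (a b p : ℝ) (hb : 0 ≤ b)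
    (hp0 : 0 ≤ p) (hp1 : p ≤ 1) (h1 : a ≤ p * n / 2) (h2 : p * n / 2 ≤ a + b)
    (h3 : a + b ≤ n * p) :
    ∃ (Ω : Type) (_ : MeasureSpace Ω),
      IsProbabilityMeasure (ℙ : Measure Ω) ∧
      ∃ X : Fin n → Ω → ℝ, (∀ i, Measurable (X i)) ∧
        (∀ i, Measure.map (X i) ℙ = unif 0 1) ∧
        p = (ℙ {ω | ∑ i, X i ω ∈ Set.Icc a (a + b)}).toReal := by
  obtain ⟨φ, hφm, hφmap, hφsum⟩ := trio n (by omega)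
  have hn0 : (0:ℝ) < n := by positivity
  refine ⟨ℝ, msp, ?_, fun i v => if v < p then p * φ i (v / p) else v, ?_, ?_, ?_⟩
  · constructor
    show (volume.restrict (Icc (0:ℝ) 1)) univ = 1
    rw [Measure.restrict_apply_univ, Real.volume_Icc]
    norm_num
  · intro i
    show Measurable (fun v : ℝ => if v < p then p * φ i (v / p) else v)
    exact Measurable.ite (measurableSet_lt measurable_id measurable_const)
      (measurable_const.mul ((hφm i).comp (measurable_id.div_const p))) measurable_id
  · intro i
    show Measure.map _ (volume.restrict (Icc (0:ℝ) 1)) = unif 0 1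
    rw [aux_unif01, aux_icc_ico]
    rcases eq_or_lt_of_le hp0 with hp | hp
    · refine Measure.map_congr ?_ |>.trans Measure.map_id'
      filter_upwards [self_mem_ae_restrict measurableSet_Ico] with v hv
      have : ¬ v < p := by rw [← hp]; exact not_lt.mpr hv.1
      simp [this]
    · -- split into [0,p) and [p,1)
      have hsplit : volume.restrict (Ico (0:ℝ) 1)
          = volume.restrict (Ico 0 p) + volume.restrict (Ico p 1) := by
        rw [← Measure.restrict_union Set.Ico_disjoint_Ico_same measurableSet_Ico,
          Set.Ico_union_Ico_eq_Ico (le_of_lt hp) hp1]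
      have hpiece2 : Measure.map (fun v => if v < p then p * φ i (v / p) else v)
          (volume.restrict (Ico p 1)) = volume.restrict (Ico p 1) := by
        refine Measure.map_congr ?_ |>.trans Measure.map_id'
        filter_upwards [self_mem_ae_restrict measurableSet_Ico] with v hv
        simp [not_lt.mpr hv.1]
      have hpiece1 : Measure.map (fun v => if v < p then p * φ i (v / p) else v)
          (volume.restrict (Ico 0 p)) = volume.restrict (Ico 0 p) := by
        have e1 : Measure.map (fun v => if v < p then p * φ i (v / p) else v)
            (volume.restrict (Ico 0 p))
            = Measure.map ((fun x : ℝ => p * x + 0) ∘ (φ i) ∘ (fun x : ℝ => p⁻¹ * x + 0))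
              (volume.restrict (Ico 0 p)) := by
          refine Measure.map_congr ?_
          filter_upwards [self_mem_ae_restrict measurableSet_Ico] with v hv
          simp only [Function.comp_apply, if_pos hv.2, add_zero]
          rw [inv_mul_eq_div]
        rw [e1, ← Measure.map_map (by fun_prop) (by fun_prop),
          ← Measure.map_map (hφm i) (by fun_prop)]
        have e2 : (Ico (0:ℝ) p) = (fun x : ℝ => p⁻¹ * x + 0) ⁻¹' (Ico 0 1) := by
          ext v
          simp only [mem_preimage, mem_Ico, add_zero, inv_mul_eq_div]
          rw [le_div_iff₀ hp, div_lt_one hp]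
          simp
        rw [e2, aux_map_affine_restrict _ _ (by positivity) measurableSet_Ico,
          Measure.map_smul, hφmap i, Measure.map_smul]
        have e3 : (Ico (0:ℝ) 1) = (fun x : ℝ => p * x + 0) ⁻¹' (Ico 0 p) := by
          ext v
          simp only [mem_preimage, mem_Ico, add_zero]
          constructor
          · rintro ⟨h1', h2'⟩
            exact ⟨mul_nonneg (le_of_lt hp) h1', by nlinarith⟩
          · rintro ⟨h1', h2'⟩
            exact ⟨(mul_le_mul_iff_right₀ hp).mp (by linarith), (mul_lt_mul_iff_right₀ hp).mp (by linarith)⟩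
        rw [e3, aux_map_affine_restrict _ _ (ne_of_gt hp) measurableSet_Ico,
          smul_smul, inv_inv, abs_of_pos hp, abs_of_pos (inv_pos.mpr hp),
          ← ENNReal.ofReal_mul hp0, mul_inv_cancel₀ (ne_of_gt hp), ENNReal.ofReal_one, one_smul]
        have e4 : ((fun x : ℝ => p⁻¹ * x + 0) ⁻¹' ((fun x : ℝ => p * x + 0) ⁻¹' Ico 0 p)) = Ico 0 p := by
          ext v; simp [mul_inv_cancel_left₀ (ne_of_gt hp)]
        rw [e4]
      rw [hsplit, Measure.map_add _ _ ?_, hpiece1, hpiece2]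
      exact Measurable.ite (measurableSet_lt measurable_id measurable_const)
        (measurable_const.mul ((hφm i).comp (measurable_id.div_const p))) measurable_id
  · -- the probability computation
    have hS : ∀ v : ℝ, ∑ i, (if v < p then p * φ i (v / p) else v) = if v < p then p * n / 2 else n * v := by
      intro v
      by_cases h : v < p
      · simp only [if_pos h, ← Finset.mul_sum, hφsum]
        ring
      · simp only [if_neg h, Finset.sum_const, Finset.card_univ, Fintype.card_fin,
          nsmul_eq_mul]
    have hsetlow : Ico 0 p ⊆ {v : ℝ | ∑ i, (if v < p then p * φ i (v / p) else v) ∈ Icc a (a+b)} := by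
      intro v hv
      simp only [mem_setOf_eq, hS, if_pos hv.2, mem_Icc]
      exact ⟨h1, h2⟩
    have hsethigh : {v : ℝ | ∑ i, (if v < p then p * φ i (v / p) else v) ∈ Icc a (a+b)} ∩ Icc 0 1 ⊆ Icc 0 p := by
      rintro v ⟨hv, hv01⟩
      simp only [mem_setOf_eq, hS, mem_Icc] at hv
      refine ⟨hv01.1, ?_⟩
      by_cases h : v < p
      · exact le_of_lt h
      · rw [if_neg h] at hv
        nlinarith [hv.2, hv01.1]
    show p = ((volume.restrict (Icc (0:ℝ) 1)) _).toReal
    have hkey : (volume.restrict (Icc (0:ℝ) 1)) {v : ℝ | ∑ i, (if v < p then p * φ i (v / p) else v) ∈ Icc a (a+b)} = ENNReal.ofReal p := by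
      apply le_antisymm
      · rw [Measure.restrict_apply' measurableSet_Icc]
        calc volume _ ≤ volume (Icc 0 p) := measure_mono hsethigh
        _ = ENNReal.ofReal p := by rw [Real.volume_Icc]; norm_num
      · calc ENNReal.ofReal p = volume (Ico 0 p) := by rw [Real.volume_Ico]; norm_num
        _ = (volume.restrict (Icc (0:ℝ) 1)) (Ico 0 p) := by
            have hsub : Ico (0:ℝ) p ⊆ Icc 0 1 := fun v hv => ⟨hv.1, le_trans (le_of_lt hv.2) hp1⟩
            rw [Measure.restrict_apply' measurableSet_Icc, inter_eq_left.mpr hsub]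
        _ ≤ _ := by
            rw [Measure.restrict_apply' measurableSet_Icc, Measure.restrict_apply' measurableSet_Icc]
            exact measure_mono (inter_subset_inter_left _ hsetlow)
    rw [hkey, ENNReal.toReal_ofReal hp0]


lemma refl_unif : Measure.map (fun v : ℝ => 1 - v) (unif 0 1) = unif 0 1 := by
  rw [aux_unif01, aux_icc_ico, refl_pres]

section
variable {Ω : Type} [MeasureSpace Ω] [IsProbabilityMeasure (ℙ : Measure Ω)]
  {U : Ω → ℝ}

lemma mem01 (hU : Measurable U) (hlaw : Measure.map U ℙ = unif 0 1) :
    ∀ᵐ ω ∂(ℙ : Measure Ω), U ω ∈ Icc (0:ℝ) 1 := by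
  have h : (ℙ : Measure Ω) (U ⁻¹' (Icc 0 1)ᶜ) = 0 := by
    rw [← Measure.map_apply hU (measurableSet_Icc.compl), hlaw, aux_unif01,
      Measure.restrict_apply measurableSet_Icc.compl]
    simp
  rw [ae_iff]
  exact h

lemma integ01 (hU : Measurable U) (hlaw : Measure.map U ℙ = unif 0 1) :
    Integrable U (ℙ : Measure Ω) := by
  refine Integrable.mono' (integrable_const 1) hU.aestronglyMeasurable ?_
  filter_upwards [mem01 hU hlaw] with ω hω
  rw [Real.norm_eq_abs, abs_le]
  exact ⟨by linarith [hω.1], hω.2⟩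

lemma key (hU : Measurable U) (hlaw : Measure.map U ℙ = unif 0 1)
    {A : Set Ω} (hA : MeasurableSet A) :
    ((ℙ : Measure Ω) A).toReal ^ 2 / 2 ≤ ∫ ω in A, U ω ∂(ℙ : Measure Ω) := by
  set p := ((ℙ : Measure Ω) A).toReal with hp
  have hp0 : 0 ≤ p := ENNReal.toReal_nonneg
  have hp1 : p ≤ 1 := by
    rw [hp]
    exact ENNReal.toReal_le_of_le_ofReal one_pos.le (by simpa using prob_le_one)
  set B := U ⁻¹' (Iic p) with hBdef
  have hB : MeasurableSet B := hU measurableSet_Iic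
  have hInt : Integrable U (ℙ : Measure Ω) := integ01 hU hlaw
  have hPB : (ℙ : Measure Ω) B = ENNReal.ofReal p := by
    rw [hBdef, ← Measure.map_apply hU measurableSet_Iic, hlaw, aux_unif01,
      Measure.restrict_apply measurableSet_Iic]
    have : Iic p ∩ Icc 0 1 = Icc 0 p := by
      ext x; simp only [mem_inter_iff, mem_Iic, mem_Icc]
      constructor
      · rintro ⟨h1, h2, h3⟩; exact ⟨h2, h1⟩
      · rintro ⟨h1, h2⟩; exact ⟨h2, h1, le_trans h2 hp1⟩
    rw [this, Real.volume_Icc]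
    norm_num
  have hIntB : ∫ ω in B, U ω ∂(ℙ : Measure Ω) = p ^ 2 / 2 := by
    have h1 : ∫ ω in B, U ω ∂(ℙ : Measure Ω) = ∫ x in Iic p, x ∂(Measure.map U ℙ) := by
      exact (setIntegral_map (f := fun x => x) measurableSet_Iic
        measurable_id.aestronglyMeasurable hU.aemeasurable).symm
    rw [h1, hlaw, aux_unif01, Measure.restrict_restrict measurableSet_Iic]
    have : Iic p ∩ Icc 0 1 = Icc 0 p := by
      ext x; simp only [mem_inter_iff, mem_Iic, mem_Icc]
      constructor
      · rintro ⟨h1, h2, h3⟩; exact ⟨h2, h1⟩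
      · rintro ⟨h1, h2⟩; exact ⟨h2, h1, le_trans h2 hp1⟩
    rw [this, integral_Icc_eq_integral_Ioc, ← intervalIntegral.integral_of_le hp0,
      integral_id]
    ring
  -- decompositions
  have hAB : (ℙ : Measure Ω) (A ∩ B) + (ℙ : Measure Ω) (A \ B) = (ℙ : Measure Ω) A :=
    measure_inter_add_diff A hB
  have hBA : (ℙ : Measure Ω) (B ∩ A) + (ℙ : Measure Ω) (B \ A) = (ℙ : Measure Ω) B :=
    measure_inter_add_diff B hA
  have hfin : ∀ s : Set Ω, (ℙ : Measure Ω) s ≠ ⊤ := fun s => measure_ne_top _ _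
  have hmeq : ((ℙ : Measure Ω) (A \ B)).toReal = ((ℙ : Measure Ω) (B \ A)).toReal := by
    have h1 := congrArg ENNReal.toReal hAB
    have h2 := congrArg ENNReal.toReal hBA
    rw [ENNReal.toReal_add (hfin _) (hfin _)] at h1 h2
    rw [inter_comm B A] at h2
    rw [hPB, ENNReal.toReal_ofReal hp0] at h2
    rw [← hp] at h1
    linarith
  -- integral inequalities on A \ B and B \ A
  have hdAB : ∫ ω in A \ B, U ω ∂(ℙ : Measure Ω)
      ≥ p * ((ℙ : Measure Ω) (A \ B)).toReal := by
    have h0 : 0 ≤ ∫ ω in A \ B, (U ω - p) ∂(ℙ : Measure Ω) := by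
      refine setIntegral_nonneg (hA.diff hB) ?_
      intro ω hω
      have : ¬ U ω ≤ p := hω.2
      linarith [not_le.mp this]
    rw [integral_sub hInt.integrableOn (integrableOn_const (measure_ne_top _ _)),
      setIntegral_const] at h0
    simp only [smul_eq_mul, measureReal_def] at h0
    linarith
  have hdBA : ∫ ω in B \ A, U ω ∂(ℙ : Measure Ω)
      ≤ p * ((ℙ : Measure Ω) (B \ A)).toReal := by
    have h0 : 0 ≤ ∫ ω in B \ A, (p - U ω) ∂(ℙ : Measure Ω) := by
      refine setIntegral_nonneg (hB.diff hA) ?_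
      intro ω hω
      have : U ω ≤ p := hω.1
      linarith
    rw [integral_sub (integrable_const _) hInt.integrableOn,
      setIntegral_const] at h0
    simp only [smul_eq_mul, measureReal_def] at h0
    linarith
  have hsplitA : ∫ ω in A, U ω ∂(ℙ : Measure Ω)
      = ∫ ω in A ∩ B, U ω ∂(ℙ : Measure Ω) + ∫ ω in A \ B, U ω ∂(ℙ : Measure Ω) := by
    rw [← setIntegral_union (disjoint_sdiff_right.mono_left inter_subset_right) (hA.diff hB)
      hInt.integrableOn hInt.integrableOn, inter_union_diff]
  have hsplitB : ∫ ω in B, U ω ∂(ℙ : Measure Ω)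
      = ∫ ω in A ∩ B, U ω ∂(ℙ : Measure Ω) + ∫ ω in B \ A, U ω ∂(ℙ : Measure Ω) := by
    rw [← setIntegral_union (disjoint_sdiff_right.mono_left inter_subset_left) (hB.diff hA)
      hInt.integrableOn hInt.integrableOn, inter_comm, inter_union_diff]
  rw [hsplitA]
  rw [hsplitB] at hIntB
  rw [hmeq] at hdAB
  linarith [hdAB, hdBA]
end



theorem stmt19 (n : ℕ) (hn : 3 ≤ n) (a b : ℝ) (ha : 0 ≤ a) (hb : 0 ≤ b)
    (hab : a + b ≤ (n : ℝ)) :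
    IsGreatest {r : ℝ | ∃ (Ω : Type) (_ : MeasureSpace Ω),
        IsProbabilityMeasure (ℙ : Measure Ω) ∧
        ∃ X : Fin n → Ω → ℝ, (∀ i, Measurable (X i)) ∧
          (∀ i, Measure.map (X i) ℙ = unif 0 1) ∧
          r = (ℙ {ω | ∑ i, X i ω ∈ Set.Icc a (a + b)}).toReal}
      (min (min (2 * (a + b) / n) (2 * ((n : ℝ) - a) / n)) 1) := by
  have hn0 : (0:ℝ) < n := by positivity
  constructor
  · -- membership
    by_cases hc1 : a + b ≤ n / 2
    · -- case 1
      have h1 : min (2 * (a + b) / n) (2 * ((n:ℝ) - a) / n) = 2 * (a + b) / n :=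
        min_eq_left ((div_le_div_iff_of_pos_right hn0).mpr (by linarith))
      have hmin : min (min (2 * (a + b) / n) (2 * ((n:ℝ) - a) / n)) 1
          = 2 * (a + b) / n := by
        rw [h1, min_eq_left (by rw [div_le_one hn0]; linarith)]
      rw [hmin]
      have hpn : 2 * (a + b) / n * n / 2 = a + b := by field_simp
      have hpn' : (n:ℝ) * (2 * (a + b) / n) = 2 * (a + b) := by field_simp
      exact construct n hn a b _ hb (by positivity) (by rw [div_le_one hn0]; linarith)
        (by rw [hpn]; linarith) (by rw [hpn]) (by rw [hpn']; linarith)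
    · by_cases hc2 : (n:ℝ) / 2 ≤ a
      · -- case 2 : reflected
        have h1 : min (2 * (a + b) / n) (2 * ((n:ℝ) - a) / n) = 2 * ((n:ℝ) - a) / n :=
          min_eq_right ((div_le_div_iff_of_pos_right hn0).mpr (by linarith))
        have hmin : min (min (2 * (a + b) / n) (2 * ((n:ℝ) - a) / n)) 1
            = 2 * ((n:ℝ) - a) / n := by
          rw [h1, min_eq_left (by rw [div_le_one hn0]; linarith)]
        rw [hmin]
        set p := 2 * ((n:ℝ) - a) / n with hpdef
        have hpn : p * n / 2 = (n:ℝ) - a := by rw [hpdef]; field_simp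
        have hpn' : (n:ℝ) * p = 2 * ((n:ℝ) - a) := by rw [hpdef]; field_simp
        obtain ⟨Ω, inst, hprob, X, hXm, hXlaw, hval⟩ :=
          construct n hn ((n:ℝ) - a - b) b p hb
            (div_nonneg (by linarith) hn0.le)
            (by rw [hpdef, div_le_one hn0]; linarith)
            (by rw [hpn]; linarith) (by rw [hpn]; linarith)
            (by rw [hpn']; linarith)
        refine ⟨Ω, inst, hprob, fun i ω => 1 - X i ω, ?_, ?_, ?_⟩
        · intro i; exact measurable_const.sub (hXm i)
        · intro i
          show Measure.map (fun ω => 1 - X i ω) ℙ = unif 0 1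
          have e : (fun ω => 1 - X i ω) = (fun x : ℝ => 1 - x) ∘ (X i) := rfl
          rw [e, ← Measure.map_map (by fun_prop) (hXm i), hXlaw i, refl_unif]
        · show _ = ((ℙ : Measure Ω) {ω | ∑ i, (1 - X i ω) ∈ Icc a (a + b)}).toReal
          have hev : {ω : Ω | ∑ i, (1 - X i ω) ∈ Icc a (a + b)}
              = {ω : Ω | ∑ i, X i ω ∈ Icc ((n:ℝ) - a - b) ((n:ℝ) - a - b + b)} := by
            ext ω
            have hsum : ∑ i, (1 - X i ω) = (n:ℝ) - ∑ i, X i ω := by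
              rw [Finset.sum_sub_distrib, Finset.sum_const, Finset.card_univ,
                Fintype.card_fin, nsmul_eq_mul, mul_one]
            simp only [mem_setOf_eq, hsum, mem_Icc]
            constructor <;> rintro ⟨u1, u2⟩ <;> constructor <;> linarith
          rw [hev]
          exact hval
      · -- case 3 : min = 1
        push_neg at hc1 hc2
        have hmin : min (min (2 * (a + b) / n) (2 * ((n:ℝ) - a) / n)) 1 = 1 := by
          rw [min_eq_right]
          rw [le_min_iff]
          constructor
          · rw [le_div_iff₀ hn0]; linarith
          · rw [le_div_iff₀ hn0]; linarith
        rw [hmin]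
        exact construct n hn a b 1 hb (by norm_num) (le_refl _)
          (by rw [one_mul]; linarith) (by rw [one_mul]; linarith) (by linarith)
  · -- upper bound
    rintro r ⟨Ω, inst, hprob, X, hXm, hXlaw, hr⟩
    haveI := hprob
    have hSm : Measurable (fun ω => ∑ i, X i ω) :=
      Finset.measurable_sum _ (fun i _ => hXm i)
    have hA : MeasurableSet {ω : Ω | ∑ i, X i ω ∈ Icc a (a + b)} := by
      exact hSm measurableSet_Icc
    set A := {ω : Ω | ∑ i, X i ω ∈ Icc a (a + b)} with hAdef
    set p := ((ℙ : Measure Ω) A).toReal with hp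
    have hp0 : 0 ≤ p := ENNReal.toReal_nonneg
    have hp1 : p ≤ 1 :=
      ENNReal.toReal_le_of_le_ofReal one_pos.le (by simpa using prob_le_one)
    have hIntX : ∀ i, Integrable (X i) (ℙ : Measure Ω) :=
      fun i => integ01 (hXm i) (hXlaw i)
    have hlow : ∀ i, p ^ 2 / 2 ≤ ∫ ω in A, X i ω ∂(ℙ : Measure Ω) :=
      fun i => key (hXm i) (hXlaw i) hA
    have hhigh : ∀ i, ∫ ω in A, X i ω ∂(ℙ : Measure Ω) ≤ p - p ^ 2 / 2 := by
      intro i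
      have hlaw' : Measure.map (fun ω => 1 - X i ω) (ℙ : Measure Ω) = unif 0 1 := by
        have : (fun ω => 1 - X i ω) = (fun x : ℝ => 1 - x) ∘ (X i) := rfl
        rw [this, ← Measure.map_map (by fun_prop) (hXm i), hXlaw i, refl_unif]
      have h := key (U := fun ω => 1 - X i ω) (measurable_const.sub (hXm i)) hlaw' hA
      rw [integral_sub (integrable_const _)
        (hIntX i).integrableOn, setIntegral_const] at h
      simp only [smul_eq_mul, mul_one, measureReal_def] at h
      rw [← hp] at h
      linarith
    have hintS : ∫ ω in A, (∑ i, X i ω) ∂(ℙ : Measure Ω)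
        = ∑ i, ∫ ω in A, X i ω ∂(ℙ : Measure Ω) :=
      integral_finset_sum _ (fun i _ => (hIntX i).integrableOn)
    have hIntS : Integrable (fun ω => ∑ i, X i ω) (ℙ : Measure Ω) :=
      integrable_finset_sum _ (fun i _ => hIntX i)
    have hSl : a * p ≤ ∫ ω in A, (∑ i, X i ω) ∂(ℙ : Measure Ω) := by
      have h0 : 0 ≤ ∫ ω in A, ((∑ i, X i ω) - a) ∂(ℙ : Measure Ω) := by
        refine setIntegral_nonneg hA ?_
        intro ω hω
        have := (mem_Icc.mp hω).1
        linarith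
      rw [integral_sub hIntS.integrableOn
        (integrableOn_const (measure_ne_top _ _)), setIntegral_const] at h0
      simp only [smul_eq_mul, mul_one, measureReal_def] at h0
      rw [← hp] at h0
      linarith
    have hSu : ∫ ω in A, (∑ i, X i ω) ∂(ℙ : Measure Ω) ≤ (a + b) * p := by
      have h0 : 0 ≤ ∫ ω in A, ((a + b) - (∑ i, X i ω)) ∂(ℙ : Measure Ω) := by
        refine setIntegral_nonneg hA ?_
        intro ω hω
        have := (mem_Icc.mp hω).2
        linarith
      rw [integral_sub (integrable_const _)
        hIntS.integrableOn, setIntegral_const] at h0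
      simp only [smul_eq_mul, mul_one, measureReal_def] at h0
      rw [← hp] at h0
      linarith
    have hsum_low : (n:ℝ) * (p ^ 2 / 2) ≤ ∫ ω in A, (∑ i, X i ω) ∂(ℙ : Measure Ω) := by
      rw [hintS]
      calc (n:ℝ) * (p ^ 2 / 2) = ∑ _i : Fin n, (p ^ 2 / 2) := by
            rw [Finset.sum_const, Finset.card_univ, Fintype.card_fin, nsmul_eq_mul]
        _ ≤ _ := Finset.sum_le_sum (fun i _ => hlow i)
    have hsum_high : ∫ ω in A, (∑ i, X i ω) ∂(ℙ : Measure Ω)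
        ≤ (n:ℝ) * (p - p ^ 2 / 2) := by
      rw [hintS]
      calc ∑ i, ∫ ω in A, X i ω ∂(ℙ : Measure Ω)
          ≤ ∑ _i : Fin n, (p - p ^ 2 / 2) := Finset.sum_le_sum (fun i _ => hhigh i)
        _ = (n:ℝ) * (p - p ^ 2 / 2) := by
            rw [Finset.sum_const, Finset.card_univ, Fintype.card_fin, nsmul_eq_mul]
    rw [hr]
    refine le_min (le_min ?_ ?_) hp1
    · rw [le_div_iff₀ hn0]
      rcases eq_or_lt_of_le hp0 with h | h
      · rw [← h]; simp; linarith
      · nlinarith [hsum_low, hSu, h]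
    · rw [le_div_iff₀ hn0]
      rcases eq_or_lt_of_le hp0 with h | h
      · rw [← h]; simp; linarith
      · nlinarith [hsum_high, hSl, h]
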